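/- Let A = (V, μ, η, α) be a unital hom-associative algebra over a field K with unit e₂ = η(1) satisfying α(e₂) = e₂, and let K₁(A) = (Ṽ, μ₁, η₁, Δ₁, ε₁, α₁) be the first Kaplansky construction on Ṽ = K·e₁ ⊕ V. Then the unital hom-infinitesimal relation holds on V: for all x, y ∈ V, Δ₁(μ(x,y)) = (μ₁⊗α₁)((α₁⊗Δ₁)(x⊗y)) + (α₁⊗μ₁)((Δ₁⊗α₁)(x⊗y)) − α₁(α₁(x))⊗α₁(y), i.e. Δ₁(μ(x,y)) = α(μ(x,y))⊗e₁ + e₁⊗α(μ(x,y)) − e₂⊗α(μ(x,y)) equals the right-hand side. -/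
import Mathlib


open TensorProduct

namespace Stmt6

variable {K V : Type*} [Field K] [AddCommGroup V] [Module K V]

/-- The extended space `Ṽ = K·e₁ ⊕ V`, realized as `K × V`, with `e₁ = (1,0)`
and `V` embedded via `x ↦ (0,x)`. -/
abbrev Vt (K V : Type*) := K × V

/-- The embedding `V → Ṽ`. -/
def iota : V →ₗ[K] Vt K V := LinearMap.inr K K V

/-- The adjoined unit `e₁ ∈ Ṽ`. -/
def e₁ : Vt K V := (1, 0)

/-- The Kaplansky multiplication `μ₁` on `Ṽ`: `e₁` is a two-sided unit and
`μ₁` restricts to `μ` on `V`. -/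
def mu₁ (μ : V →ₗ[K] V →ₗ[K] V) : Vt K V →ₗ[K] Vt K V →ₗ[K] Vt K V :=
  LinearMap.mk₂ K
    (fun p q => (p.1 * q.1, p.1 • q.2 + q.1 • p.2 + μ p.2 q.2))
    (by intro p p' q; ext <;>
      simp [add_mul, add_smul, smul_add, map_add] <;> abel)
    (by intro c p q; ext <;>
      simp [mul_assoc, mul_smul, smul_add, smul_comm q.1 c, map_smul])
    (by intro p q q'; ext <;>
      simp [mul_add, add_smul, smul_add, map_add] <;> abel)
    (by intro c p q; ext <;>
      simp [mul_left_comm, mul_smul, smul_add, smul_comm p.1 c, map_smul])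

/-- The twisting map `α₁` on `Ṽ`: `α₁(e₁) = e₁`, `α₁ = α` on `V`. -/
def alpha₁ (α : V →ₗ[K] V) : Vt K V →ₗ[K] Vt K V := LinearMap.prodMap LinearMap.id α

/-- The Kaplansky comultiplication `Δ₁` on `Ṽ`: `Δ₁(e₁) = e₁ ⊗ e₁` and
`Δ₁(x) = α(x)⊗e₁ + e₁⊗α(x) − e₂⊗α(x)` for `x ∈ V`. -/
noncomputable def Delta₁ (α : V →ₗ[K] V) (e₂ : V) :
    Vt K V →ₗ[K] (Vt K V) ⊗[K] (Vt K V) :=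
  (LinearMap.fst K K V).smulRight ((e₁ : Vt K V) ⊗ₜ[K] (e₁ : Vt K V))
    + ((TensorProduct.mk K (Vt K V) (Vt K V)).flip e₁).comp
        ((iota : V →ₗ[K] Vt K V).comp (α.comp (LinearMap.snd K K V)))
    + (TensorProduct.mk K (Vt K V) (Vt K V) e₁).comp
        ((iota : V →ₗ[K] Vt K V).comp (α.comp (LinearMap.snd K K V)))
    - (TensorProduct.mk K (Vt K V) (Vt K V) (iota e₂)).comp
        ((iota : V →ₗ[K] Vt K V).comp (α.comp (LinearMap.snd K K V)))

/-- For a unital hom-associative algebra `(V, μ, e₂, α)` with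
`α(e₂) = e₂`, the first Kaplansky construction `K₁(A)` satisfies the unital
hom-infinitesimal relation on `V`: for all `x, y ∈ V`,
`Δ₁(μ(x,y)) = (μ₁⊗α₁)((α₁⊗Δ₁)(x⊗y)) + (α₁⊗μ₁)((Δ₁⊗α₁)(x⊗y)) − α₁²(x) ⊗ α₁(y)`. -/
theorem stmt_6 (μ : V →ₗ[K] V →ₗ[K] V) (α : V →ₗ[K] V) (e₂ : V)
    (hmult : ∀ x y : V, α (μ x y) = μ (α x) (α y))
    (hassoc : ∀ x y z : V, μ (α x) (μ y z) = μ (μ x y) (α z))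
    (hunitl : ∀ x : V, μ e₂ x = x) (hunitr : ∀ x : V, μ x e₂ = x)
    (hαe : α e₂ = e₂) :
    ∀ x y : V,
      Delta₁ α e₂ (iota (μ x y))
        = TensorProduct.map (TensorProduct.lift (mu₁ μ)) (alpha₁ α)
            ((TensorProduct.assoc K (Vt K V) (Vt K V) (Vt K V)).symm
              (TensorProduct.map (alpha₁ α) (Delta₁ α e₂)
                ((iota x : Vt K V) ⊗ₜ[K] (iota y : Vt K V))))
          + TensorProduct.map (alpha₁ α) (TensorProduct.lift (mu₁ μ))
              ((TensorProduct.assoc K (Vt K V) (Vt K V) (Vt K V))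
                (TensorProduct.map (Delta₁ α e₂) (alpha₁ α)
                  ((iota x : Vt K V) ⊗ₜ[K] (iota y : Vt K V))))
          - (iota (α (α x)) : Vt K V) ⊗ₜ[K] (iota (α y) : Vt K V) := by

  intro x y
  have hD : ∀ v : V, Delta₁ α e₂ (iota v : Vt K V)
      = (iota (α v) : Vt K V) ⊗ₜ[K] (e₁ : Vt K V)
        + (e₁ : Vt K V) ⊗ₜ[K] (iota (α v) : Vt K V)
        - (iota e₂ : Vt K V) ⊗ₜ[K] (iota (α v) : Vt K V) := by
    intro v
    simp [Delta₁, iota, e₁]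
  have ha : ∀ v : V, alpha₁ α (iota v : Vt K V) = (iota (α v) : Vt K V) := by
    intro v; simp [alpha₁, iota]
  have hae1 : alpha₁ α (e₁ : Vt K V) = (e₁ : Vt K V) := by
    simp [alpha₁, e₁]
  have hm : ∀ u v : V, TensorProduct.lift (mu₁ μ) ((iota u : Vt K V) ⊗ₜ[K] (iota v : Vt K V))
      = (iota (μ u v) : Vt K V) := by
    intro u v; simp [mu₁, iota]
  have hml : ∀ v : V, TensorProduct.lift (mu₁ μ) ((e₁ : Vt K V) ⊗ₜ[K] (iota v : Vt K V))
      = (iota v : Vt K V) := by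
    intro v; simp [mu₁, iota, e₁]
  have hmr : ∀ v : V, TensorProduct.lift (mu₁ μ) ((iota v : Vt K V) ⊗ₜ[K] (e₁ : Vt K V))
      = (iota v : Vt K V) := by
    intro v; simp [mu₁, iota, e₁]
  rw [hD]
  rw [show (TensorProduct.map (alpha₁ α) (Delta₁ α e₂)
        ((iota x : Vt K V) ⊗ₜ[K] (iota y : Vt K V)))
      = (iota (α x) : Vt K V) ⊗ₜ[K] (Delta₁ α e₂ (iota y : Vt K V)) by
    simp [ha]]
  rw [show (TensorProduct.map (Delta₁ α e₂) (alpha₁ α)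
        ((iota x : Vt K V) ⊗ₜ[K] (iota y : Vt K V)))
      = (Delta₁ α e₂ (iota x : Vt K V)) ⊗ₜ[K] (iota (α y) : Vt K V) by
    simp [ha]]
  rw [hD, hD]
  simp only [TensorProduct.tmul_add, TensorProduct.tmul_sub, TensorProduct.add_tmul,
    TensorProduct.sub_tmul, map_add, map_sub, TensorProduct.assoc_symm_tmul,
    TensorProduct.assoc_tmul, TensorProduct.map_tmul]
  simp only [hm, hml, hmr, ha, hae1, hαe, hunitr, ← hmult]
  abel


end Stmt6
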